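/- Let s ≥ 2 be an integer and ξ ∈ (0,1). For all sufficiently large n the following holds: if c'' is an s-edge-colouring of K_n and h is an integer with h ≥ (log n)^{2/ξ} such that every h-element subset of {1,…,n} contains, for each colour i ∈ {1,…,s}, a pair coloured i under c'', then there exists an (s+1)-edge-colouring c''' of K_n satisfying c'''(e) ∈ {c''(e), s+1} for every pair e, such that every subset of {1,…,n} of size at least ⌈h^{1+ξ}⌉ contains, for each colour i ∈ {1,…,s+1}, a pair coloured i under c'''. -/

import Mathlib

open Finset

lemma count_forall {α : Type*} [Fintype α] [DecidableEq α] {K : ℕ}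
    (S : Finset α) (P : Fin K → Prop) [DecidablePred P] :
    (Finset.univ.filter (fun ω : α → Fin K => ∀ e ∈ S, P (ω e))).card
      = (Finset.univ.filter P).card ^ S.card * K ^ (Fintype.card α - S.card) := by
  have h1 : Finset.univ.filter (fun ω : α → Fin K => ∀ e ∈ S, P (ω e))
      = Fintype.piFinset (fun e => if e ∈ S then Finset.univ.filter P else Finset.univ) := by
    ext ω
    simp only [Fintype.mem_piFinset, Finset.mem_filter, Finset.mem_univ, true_and]
    constructor
    · intro hω e
      by_cases he : e ∈ S <;> simp [he, hω e]
    · intro hω e he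
      have := hω e
      simpa [he] using this
  rw [h1, Fintype.card_piFinset]
  have h2 : ∀ e : α, (if e ∈ S then Finset.univ.filter P else (Finset.univ : Finset (Fin K))).card
      = if e ∈ S then (Finset.univ.filter P).card else K := by
    intro e; by_cases he : e ∈ S <;> simp [he]
  simp only [h2]
  rw [← Finset.prod_filter_mul_prod_filter_not Finset.univ (· ∈ S)]
  rw [Finset.prod_congr rfl (fun x hx => if_pos (Finset.mem_filter.mp hx).2),
    Finset.prod_congr rfl (fun x hx => if_neg (Finset.mem_filter.mp hx).2)]
  have h3 : Finset.univ.filter (fun x => x ∉ S) = Sᶜ := by ext x; simp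
  rw [Finset.prod_const, Finset.prod_const, Finset.filter_univ_mem, h3, Finset.card_compl]

lemma count_tail {α : Type*} [Fintype α] [DecidableEq α] {K : ℕ} [NeZero K]
    (S : Finset α) (z : ℕ) :
    (Finset.univ.filter (fun ω : α → Fin K =>
        z ≤ (S.filter (fun e => ω e = 0)).card)).card * 2 ^ z
      ≤ (K + 1) ^ S.card * K ^ (Fintype.card α - S.card) := by
  classical
  set g : α → Fin K → ℕ := fun e v => if e ∈ S ∧ v = 0 then 2 else 1 with hg
  have key : ∑ ω : α → Fin K, ∏ e, g e (ω e) = ∏ e, ∑ v : Fin K, g e v := by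
    rw [Finset.prod_univ_sum, Fintype.piFinset_univ]
  have hsum : ∀ e : α, (∑ v : Fin K, g e v) = if e ∈ S then K + 1 else K := by
    intro e
    by_cases he : e ∈ S
    · simp only [hg, he, true_and, if_pos]
      have h4 : ∀ v : Fin K, (if v = 0 then 2 else 1) = 1 + (if v = (0 : Fin K) then 1 else 0) := by
        intro v; by_cases hv : v = 0 <;> simp [hv]
      rw [Finset.sum_congr rfl (fun v _ => h4 v), Finset.sum_add_distrib,
        Finset.sum_const, Finset.sum_ite_eq' Finset.univ (0 : Fin K) (fun _ => 1)]
      simp [Finset.card_univ]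
    · simp [hg, he, Finset.card_univ]
  have hrhs : ∏ e, ∑ v : Fin K, g e v = (K + 1) ^ S.card * K ^ (Fintype.card α - S.card) := by
    rw [Finset.prod_congr rfl (fun e _ => hsum e)]
    rw [← Finset.prod_filter_mul_prod_filter_not Finset.univ (· ∈ S)]
    rw [Finset.prod_congr rfl (fun x hx => if_pos (Finset.mem_filter.mp hx).2),
      Finset.prod_congr rfl (fun x hx => if_neg (Finset.mem_filter.mp hx).2)]
    have h3 : Finset.univ.filter (fun x => x ∉ S) = Sᶜ := by ext x; simp
    rw [Finset.prod_const, Finset.prod_const, Finset.filter_univ_mem, h3, Finset.card_compl]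
  have hlb : ∀ ω : α → Fin K, z ≤ (S.filter (fun e => ω e = 0)).card →
      2 ^ z ≤ ∏ e, g e (ω e) := by
    intro ω hω
    have h5 : ∏ e, g e (ω e) = ∏ e ∈ S, (if ω e = 0 then 2 else 1) := by
      rw [← Finset.prod_subset (Finset.subset_univ S)]
      · exact Finset.prod_congr rfl (fun e he => by simp [hg, he])
      · intro e _ he; simp [hg, he]
    rw [h5, ← Finset.prod_filter_mul_prod_filter_not S (fun e => ω e = 0)]
    rw [Finset.prod_congr rfl (fun x hx => if_pos (Finset.mem_filter.mp hx).2),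
      Finset.prod_congr rfl (fun x hx => if_neg (Finset.mem_filter.mp hx).2)]
    rw [Finset.prod_const, Finset.prod_const, one_pow, mul_one]
    exact Nat.pow_le_pow_right (by norm_num) hω
  calc (Finset.univ.filter (fun ω : α → Fin K =>
        z ≤ (S.filter (fun e => ω e = 0)).card)).card * 2 ^ z
      = ∑ ω ∈ Finset.univ.filter (fun ω : α → Fin K =>
          z ≤ (S.filter (fun e => ω e = 0)).card), 2 ^ z := by
        rw [Finset.sum_const, smul_eq_mul]
    _ ≤ ∑ ω ∈ Finset.univ.filter (fun ω : α → Fin K =>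
          z ≤ (S.filter (fun e => ω e = 0)).card), ∏ e, g e (ω e) := by
        exact Finset.sum_le_sum (fun ω hω => hlb ω (Finset.mem_filter.mp hω).2)
    _ ≤ ∑ ω : α → Fin K, ∏ e, g e (ω e) := by
        exact Finset.sum_le_sum_of_subset (Finset.filter_subset _ _)
    _ = (K + 1) ^ S.card * K ^ (Fintype.card α - S.card) := by rw [key, hrhs]

lemma prune {α : Type*} [DecidableEq α] (r : α → α → Prop) [DecidableRel r] (d : ℕ)
    (V : Finset α) :
    ∃ V' ⊆ V, d * (V.card - V'.card) ≤ (∑ x ∈ V, (V.filter (r x)).card) ∧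
      ∀ x ∈ V', (V'.filter (r x)).card < d := by
  induction V using Finset.strongInduction with
  | _ V ih =>
    by_cases hall : ∀ x ∈ V, (V.filter (r x)).card < d
    · exact ⟨V, Finset.Subset.refl V, by simp, hall⟩
    · push_neg at hall
      obtain ⟨x, hxV, hxd⟩ := hall
      have hsub : V.erase x ⊂ V := Finset.erase_ssubset hxV
      obtain ⟨V', hV'sub, hV'edge, hV'deg⟩ := ih (V.erase x) hsub
      refine ⟨V', hV'sub.trans (Finset.erase_subset x V), ?_, hV'deg⟩
      have hcard : V'.card ≤ (V.erase x).card := Finset.card_le_card hV'sub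
      have hVcard : V.card = (V.erase x).card + 1 := (Finset.card_erase_add_one hxV).symm
      have hedge : (∑ y ∈ V.erase x, ((V.erase x).filter (r y)).card) + d
          ≤ ∑ y ∈ V, (V.filter (r y)).card := by
        have h1 : ∑ y ∈ V, (V.filter (r y)).card
            = (V.filter (r x)).card + ∑ y ∈ V.erase x, (V.filter (r y)).card := by
          rw [← Finset.add_sum_erase V _ hxV]
        have h2 : ∀ y ∈ V.erase x, ((V.erase x).filter (r y)).card ≤ (V.filter (r y)).card :=
          fun y _ => Finset.card_le_card (Finset.filter_subset_filter _ (Finset.erase_subset x V))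
        calc (∑ y ∈ V.erase x, ((V.erase x).filter (r y)).card) + d
            ≤ (∑ y ∈ V.erase x, (V.filter (r y)).card) + (V.filter (r x)).card :=
              Nat.add_le_add (Finset.sum_le_sum h2) hxd
          _ = _ := by rw [h1]; ring
      have hkey : d * (V.card - V'.card) = d * ((V.erase x).card - V'.card) + d := by
        rw [hVcard]
        have h3 : (V.erase x).card + 1 - V'.card = ((V.erase x).card - V'.card) + 1 := by omega
        rw [h3]; ring
      calc d * (V.card - V'.card) = d * ((V.erase x).card - V'.card) + d := hkey
        _ ≤ (∑ y ∈ V.erase x, ((V.erase x).filter (r y)).card) + d := Nat.add_le_add_right hV'edge d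
        _ ≤ ∑ y ∈ V, (V.filter (r y)).card := hedge

lemma greedy {α : Type*} [DecidableEq α] (r : α → α → Prop) [DecidableRel r]
    (hsym : Symmetric r) (d : ℕ) (V : Finset α)
    (hdeg : ∀ x ∈ V, (V.filter (r x)).card < d) :
    ∃ Y ⊆ V, V.card ≤ d * Y.card ∧ ∀ x ∈ Y, ∀ y ∈ Y, x ≠ y → ¬ r x y := by
  induction V using Finset.strongInduction with
  | _ V ih =>
    rcases V.eq_empty_or_nonempty with hV | ⟨x, hxV⟩
    · exact ⟨∅, by simp [hV]⟩
    · set V' := (V.erase x).filter (fun y => ¬ r x y) with hV'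
      have hV'subV : V' ⊆ V := (Finset.filter_subset _ _).trans (Finset.erase_subset x V)
      have hV'card : V'.card ≤ V.card := Finset.card_le_card hV'subV
      have hV'ssub : V' ⊂ V := by
        refine Finset.ssubset_iff_of_subset hV'subV |>.mpr ⟨x, hxV, ?_⟩
        simp [hV']
      obtain ⟨Y', hY'sub, hY'card, hY'indep⟩ := ih V' hV'ssub
        (fun y hy => lt_of_le_of_lt
          (Finset.card_le_card (Finset.filter_subset_filter _ hV'subV)) (hdeg y (hV'subV hy)))
      have hxY' : x ∉ Y' := fun hx => by
        have := hY'sub hx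
        simp [hV'] at this
      refine ⟨insert x Y', ?_, ?_, ?_⟩
      · intro y hy
        rcases Finset.mem_insert.mp hy with rfl | hy
        · exact hxV
        · exact hV'subV (hY'sub hy)
      · rw [Finset.card_insert_of_notMem hxY', Nat.mul_add, mul_one]
        have hVV' : V.card ≤ V'.card + d := by
          have hsd : V \ V' ⊆ insert x (V.filter (r x)) := by
            intro y hy
            rw [Finset.mem_sdiff] at hy
            obtain ⟨hyV, hyV'⟩ := hy
            by_cases hyx : y = x
            · simp [hyx]
            · have : r x y := by
                by_contra hr
                exact hyV' (by simp [hV', Finset.mem_filter, Finset.mem_erase, hyx, hyV, hr])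
              exact Finset.mem_insert.mpr (Or.inr (Finset.mem_filter.mpr ⟨hyV, this⟩))
          have h1 : (V \ V').card ≤ d := by
            calc (V \ V').card ≤ (insert x (V.filter (r x))).card := Finset.card_le_card hsd
              _ ≤ (V.filter (r x)).card + 1 := Finset.card_insert_le _ _
              _ ≤ d := hdeg x hxV
          have h2 : V.card = V'.card + (V \ V').card := by
            rw [Finset.card_sdiff_of_subset hV'subV]; omega
          omega
        omega
      · intro a ha b hb hab
        rcases Finset.mem_insert.mp ha with ha' | ha' <;>
          rcases Finset.mem_insert.mp hb with hb' | hb'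
        · exact absurd (ha'.trans hb'.symm) hab
        · have h := (Finset.mem_filter.mp (hY'sub hb')).2
          rw [ha']; exact h
        · have h := (Finset.mem_filter.mp (hY'sub ha')).2
          rw [hb']; intro hr; exact h (hsym hr)
        · exact hY'indep a ha' b hb' hab

lemma sym2_fiber_le {β : Type*} [DecidableEq β] (T : Finset (β × β)) :
    ∀ e : Sym2 β, (T.filter (fun p => s(p.1, p.2) = e)).card ≤ 2 := by
  intro e
  induction e using Sym2.ind with
  | _ a b =>
    have hsub : T.filter (fun p => s(p.1, p.2) = s(a, b)) ⊆ {(a, b), (b, a)} := by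
      intro p hp
      rw [Finset.mem_filter] at hp
      rcases Sym2.eq_iff.mp hp.2 with ⟨h1, h2⟩ | ⟨h1, h2⟩
      · simp [Prod.ext_iff, h1, h2]
      · simp [Prod.ext_iff, h1, h2]
    calc (T.filter (fun p => s(p.1, p.2) = s(a, b))).card
        ≤ ({(a, b), (b, a)} : Finset (β × β)).card := Finset.card_le_card hsub
      _ ≤ 2 := Finset.card_le_two

lemma offDiag_sym2_card {β : Type*} [DecidableEq β] (V : Finset β) :
    V.card * V.card - V.card ≤ 2 * (V.offDiag.image (fun p => s(p.1, p.2))).card := by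
  rw [← Finset.offDiag_card]
  exact Finset.card_le_mul_card_image V.offDiag 2 (fun e _ => sym2_fiber_le _ e)

lemma degsum_le {β : Type*} [DecidableEq β] (V : Finset β)
    (Q : Sym2 β → Prop) [DecidablePred Q] :
    ∑ x ∈ V, (V.filter (fun y => x ≠ y ∧ Q s(x, y))).card
      ≤ 2 * (((V.offDiag.image (fun p => s(p.1, p.2))).filter Q).card) := by
  classical
  set F := V.offDiag.filter (fun p => Q s(p.1, p.2)) with hF
  have hfib : F.card = ∑ x ∈ V, (F.filter (fun p => p.1 = x)).card := by
    apply Finset.card_eq_sum_card_fiberwise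
    intro p hp
    exact (Finset.mem_offDiag.mp (Finset.mem_filter.mp hp).1).1
  have hper : ∀ x ∈ V, (F.filter (fun p => p.1 = x)).card
      = (V.filter (fun y => x ≠ y ∧ Q s(x, y))).card := by
    intro x hx
    apply Finset.card_bij (fun p _ => p.2)
    · intro p hp
      simp only [hF, Finset.mem_filter, Finset.mem_offDiag] at hp
      obtain ⟨⟨⟨_, hp2, hne⟩, hQ⟩, h1⟩ := hp
      subst h1
      exact Finset.mem_filter.mpr ⟨hp2, hne, hQ⟩
    · intro p hp q hq hpq
      simp only [hF, Finset.mem_filter] at hp hq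
      exact Prod.ext (hp.2.trans hq.2.symm) hpq
    · intro y hy
      rw [Finset.mem_filter] at hy
      obtain ⟨hyV, hne, hQ⟩ := hy
      exact ⟨(x, y), by simp [hF, Finset.mem_offDiag, hx, hyV, hne, hQ], rfl⟩
  have himg : F.image (fun p => s(p.1, p.2))
      ⊆ (V.offDiag.image (fun p => s(p.1, p.2))).filter Q := by
    intro e he
    rw [Finset.mem_image] at he
    obtain ⟨p, hp, rfl⟩ := he
    rw [hF, Finset.mem_filter] at hp
    exact Finset.mem_filter.mpr ⟨Finset.mem_image_of_mem _ hp.1, hp.2⟩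
  calc ∑ x ∈ V, (V.filter (fun y => x ≠ y ∧ Q s(x, y))).card
      = F.card := by rw [hfib]; exact (Finset.sum_congr rfl hper).symm
    _ ≤ 2 * (F.image (fun p => s(p.1, p.2))).card :=
        Finset.card_le_mul_card_image F 2 (fun e _ => sym2_fiber_le _ e)
    _ ≤ _ := Nat.mul_le_mul_left 2 (Finset.card_le_card himg)

set_option maxHeartbeats 2000000 in
theorem stmt15 (s : ℕ) (hs : 2 ≤ s) (ξ : ℝ) (hξ₀ : 0 < ξ) (hξ₁ : ξ < 1) :
    ∃ N : ℕ, ∀ n : ℕ, N ≤ n →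
      ∀ c'' : Sym2 (Fin n) → Fin s, ∀ h : ℕ,
        (Real.logb 2 n) ^ (2 / ξ) ≤ (h : ℝ) →
        (∀ X : Finset (Fin n), X.card = h →
          ∀ i : Fin s, ∃ x ∈ X, ∃ y ∈ X, x ≠ y ∧ c'' s(x, y) = i) →
        ∃ c''' : Sym2 (Fin n) → Fin (s + 1),
          (∀ e : Sym2 (Fin n), c''' e = Fin.castSucc (c'' e) ∨ c''' e = Fin.last s) ∧
          ∀ X : Finset (Fin n), (h : ℝ) ^ (1 + ξ) ≤ (X.card : ℝ) →
            ∀ i : Fin (s + 1), ∃ x ∈ X, ∃ y ∈ X, x ≠ y ∧ c''' s(x, y) = i := by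
  classical
  refine ⟨2 ^ 4096, ?_⟩
  intro n hn c'' h hh hcol
  set L : ℝ := Real.logb 2 n with hLdef
  -- basic bounds on L, h, m
  have hnpos : (0:ℝ) < n := by
    have : (0:ℕ) < n := lt_of_lt_of_le (by positivity : (0:ℕ) < 2 ^ 4096) hn
    exact_mod_cast this
  have hL : (4096 : ℝ) ≤ L := by
    rw [hLdef, Real.le_logb_iff_rpow_le (by norm_num) hnpos]
    have h1 : ((2:ℝ) ^ (4096:ℕ)) ≤ (n:ℝ) := by exact_mod_cast hn
    rwa [← Real.rpow_natCast (2:ℝ) 4096] at h1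
    
  clear hn
  have hL1 : (1:ℝ) ≤ L := by linarith
  have hHL : L ^ (2:ℕ) ≤ (h:ℝ) := by
    have h1 : L ^ ((2:ℝ)) ≤ L ^ (2/ξ) := by
      apply Real.rpow_le_rpow_of_exponent_le hL1
      rw [le_div_iff₀ hξ₀]
      linarith
    calc L ^ (2:ℕ) = L ^ ((2:ℝ)) := by rw [← Real.rpow_natCast L 2]; norm_num
      _ ≤ L ^ (2/ξ) := h1
      _ ≤ (h:ℝ) := hh
  have hL2 : (1:ℝ) ≤ L ^ (2:ℕ) := by
    calc (1:ℝ) = 1 ^ (2:ℕ) := by norm_num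
      _ ≤ L ^ (2:ℕ) := pow_le_pow_left₀ (by norm_num) hL1 2
  have hh1 : 1 ≤ h := by
    by_contra hcon
    push_neg at hcon
    interval_cases h
    simp only [Nat.cast_zero] at hHL
    linarith
  set m : ℕ := ⌈(h:ℝ) ^ (1 + ξ)⌉₊ with hmdef
  have hmlb : (h:ℝ) ^ (1+ξ) ≤ (m:ℝ) := Nat.le_ceil _
  have hhpos : (0:ℝ) < h := by exact_mod_cast hh1
  have hmhL : (h:ℝ) * L ^ (2:ℕ) ≤ (m:ℝ) := by
    have h1 : (h:ℝ) ^ ((1:ℝ)+ξ) = (h:ℝ) * (h:ℝ) ^ ξ := by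
      rw [Real.rpow_add hhpos, Real.rpow_one]
    have h2 : L ^ (2:ℕ) ≤ (h:ℝ) ^ ξ := by
      have h3 : (L ^ (2/ξ)) ^ ξ ≤ (h:ℝ) ^ ξ :=
        Real.rpow_le_rpow (Real.rpow_nonneg (by linarith) _) hh hξ₀.le
      have h4 : (L ^ (2/ξ)) ^ ξ = L ^ (2:ℕ) := by
        rw [← Real.rpow_natCast L 2, ← Real.rpow_mul (by linarith : (0:ℝ) ≤ L)]
        congr 1
        field_simp
        norm_num
      rwa [h4] at h3
    calc (h:ℝ) * L ^ (2:ℕ) ≤ (h:ℝ) * (h:ℝ) ^ ξ :=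
          mul_le_mul_of_nonneg_left h2 hhpos.le
      _ = (h:ℝ) ^ ((1:ℝ)+ξ) := h1.symm
      _ ≤ (m:ℝ) := by rw [show ((1:ℝ)+ξ) = 1+ξ from rfl]; exact hmlb
  have hmpos : (0:ℝ) < m := lt_of_lt_of_le (by positivity) hmhL
  have hm1 : 1 ≤ m := by exact_mod_cast hmpos
  -- parameters
  set K : ℕ := 256 * h with hKdef
  haveI : NeZero K := ⟨by omega⟩
  set z : ℕ := m * m / (32 * h) with hzdef
  set d : ℕ := m / (2 * h) with hddef
  have hKpos : (0:ℝ) < K := by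
    have : 0 < K := by omega
    exact_mod_cast this
  -- basic real bounds on d and z
  have hd_ub : (d:ℝ) * (2 * h) ≤ m := by
    have := Nat.div_mul_le_self m (2 * h)
    exact_mod_cast this
  have hd_lb : (m:ℝ) < ((d:ℝ) + 1) * (2 * h) := by
    have h1 : m < (m / (2*h) + 1) * (2*h) := by
      conv_lhs => rw [← Nat.div_add_mod m (2*h)]
      have := Nat.mod_lt m (show 0 < 2*h by omega)
      calc 2*h * (m/(2*h)) + m % (2*h) < 2*h * (m/(2*h)) + 2*h := by omega
        _ = (m/(2*h) + 1) * (2*h) := by ring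
    rw [hddef]
    exact_mod_cast h1
  have hz_ub : (z:ℝ) * (32 * h) ≤ (m:ℝ) * m := by
    have := Nat.div_mul_le_self (m * m) (32 * h)
    exact_mod_cast this
  have hz_lb : (m:ℝ) * m < ((z:ℝ) + 1) * (32 * h) := by
    have h1 : m * m < (m * m / (32*h) + 1) * (32*h) := by
      conv_lhs => rw [← Nat.div_add_mod (m*m) (32*h)]
      have := Nat.mod_lt (m*m) (show 0 < 32*h by omega)
      calc 32*h * (m*m/(32*h)) + m*m % (32*h) < 32*h * (m*m/(32*h)) + 32*h := by omega
        _ = (m*m/(32*h) + 1) * (32*h) := by ring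
    rw [hzdef]
    exact_mod_cast h1
  -- m is much larger than h : m ≥ h * L^2 ≥ 4096^2 * h
  have hm4h : (4096:ℝ)^2 * h ≤ m := by
    calc (4096:ℝ)^2 * h ≤ L^(2:ℕ) * h := by
          apply mul_le_mul_of_nonneg_right _ hhpos.le
          calc (4096:ℝ)^2 = 4096^(2:ℕ) := by norm_num
            _ ≤ L^(2:ℕ) := pow_le_pow_left₀ (by norm_num) hL 2
      _ = (h:ℝ) * L^(2:ℕ) := by ring
      _ ≤ m := hmhL
  -- d ≥ m / (4h) in real terms
  have hd_lb2 : (m:ℝ) / (4 * h) ≤ d := by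
    rw [div_le_iff₀ (by positivity)]
    have h1 : (m:ℝ) ≤ d * (2*h) + 2*h := by nlinarith
    have h2 : (4:ℝ)*h ≤ m := by nlinarith
    nlinarith
  have hd1 : 1 ≤ d := by
    have : (1:ℝ) ≤ d := by
      calc (1:ℝ) ≤ m / (4*h) := by rw [le_div_iff₀ (by positivity)]; nlinarith
        _ ≤ d := hd_lb2
    exact_mod_cast this
  -- the Turan condition : d*d*h + 2*z ≤ d*m
  have factT : d * d * h + 2 * z ≤ d * m := by
    have hdr : (0:ℝ) ≤ d := Nat.cast_nonneg d
    have h1 : (d:ℝ) * d * h ≤ d * m / 2 := by nlinarith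
    have h2 : (2:ℝ) * z ≤ d * m / 4 := by
      have h3 : (z:ℝ) ≤ m * m / (32 * h) := by
        rw [le_div_iff₀ (by positivity)]; nlinarith
      have h4 : (m:ℝ) * m / (32*h) ≤ d * m / 8 := by
        rw [div_le_div_iff₀ (by positivity) (by norm_num)]
        nlinarith
      nlinarith
    have : (d:ℝ) * d * h + 2 * z ≤ d * m := by nlinarith
    exact_mod_cast this
  -- key exponent facts
  have hKr : (K:ℝ) = 256 * h := by rw [hKdef]; push_cast; ring
  have e1 : (4096:ℝ) * (h * L) * m ≤ (m:ℝ) * m := by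
    have p1 : ((h:ℝ)*L^(2:ℕ))*m ≤ (m:ℝ)*m := mul_le_mul_of_nonneg_right hmhL (Nat.cast_nonneg m)
    have p2 : ((h:ℝ)*L^(2:ℕ))*m = (h*L*m)*L := by ring
    have p3 : ((h:ℝ)*L*m)*4096 ≤ (h*L*m)*L :=
      mul_le_mul_of_nonneg_left hL (by positivity)
    nlinarith
  have e9 : (m:ℝ) * 1 ≤ m * (h * L) := by
    apply mul_le_mul_of_nonneg_left _ (Nat.cast_nonneg m)
    nlinarith
  have e7 : 1024 * (h:ℝ) ≤ m := by nlinarith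
  have fact1 : L * m + 2 ≤ ((m:ℝ) * m - m) / (2 * K) := by
    rw [le_div_iff₀ (by positivity), hKr]
    nlinarith
  have fact2 : L * m + 2 + 2 * ((m:ℝ) * m) / K ≤ z := by
    have f1 : (z:ℝ) ≥ m * m / (32*h) - 1 := by
      rw [ge_iff_le, sub_le_iff_le_add, div_le_iff₀ (by positivity)]
      nlinarith
    have f2 : (2:ℝ) * (m*m) / K = m * m / (128 * h) := by
      rw [hKr]; ring
    rw [f2]
    have f3 : L * m + 3 ≤ 3 * ((m:ℝ)*m) / (128 * h) := by
      rw [le_div_iff₀ (by positivity)]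
      nlinarith
    have f6 : (m:ℝ)*m/(32*h) - m*m/(128*h) = 3*((m:ℝ)*m)/(128*h) := by ring
    nlinarith
  -- the probabilistic construction
  set N : ℕ := Fintype.card (Sym2 (Fin n)) with hNdef
  set EX : Finset (Fin n) → Finset (Sym2 (Fin n)) :=
    fun X => X.offDiag.image (fun p => s(p.1, p.2)) with hEXdef
  set P : Finset (Finset (Fin n)) := Finset.powersetCard m Finset.univ with hPdef
  set A : Finset (Fin n) → Finset (Sym2 (Fin n) → Fin K) :=
    fun X => Finset.univ.filter (fun ω => ∀ e ∈ EX X, ω e ≠ 0) with hAdef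
  set B : Finset (Fin n) → Finset (Sym2 (Fin n) → Fin K) :=
    fun X => Finset.univ.filter
      (fun ω => z ≤ ((EX X).filter (fun e => ω e = 0)).card) with hBdef
  set Bad : Finset (Sym2 (Fin n) → Fin K) := P.biUnion (fun X => A X ∪ B X) with hBaddef
  have hK1 : (1:ℝ) ≤ K := by rw [hKr]; nlinarith
  -- base inequalities
  have hbaseA : (K:ℝ) - 1 ≤ K * (2:ℝ) ^ (-(1:ℝ)/K) := by
    have l2 : Real.log 2 ≤ 1 := le_of_lt (lt_of_lt_of_le Real.log_two_lt_d9 (by norm_num))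
    have e : (2:ℝ) ^ (-(1:ℝ)/K) = Real.exp (Real.log 2 * (-(1:ℝ)/K)) :=
      Real.rpow_def_of_pos (by norm_num) _
    rw [e]
    have e2 := Real.add_one_le_exp (Real.log 2 * (-(1:ℝ)/K))
    have e3 : (K:ℝ) * (Real.log 2 * (-(1:ℝ)/K) + 1) ≤ K * Real.exp (Real.log 2 * (-(1:ℝ)/K)) :=
      mul_le_mul_of_nonneg_left e2 (by positivity)
    have e4 : (K:ℝ) * (Real.log 2 * (-(1:ℝ)/K) + 1) = K - Real.log 2 := by
      field_simp
      ring
    linarith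
  have hbaseB : (K:ℝ) + 1 ≤ K * (2:ℝ) ^ ((2:ℝ)/K) := by
    have l2 : (1:ℝ)/2 ≤ Real.log 2 := le_of_lt (lt_of_le_of_lt (by norm_num) Real.log_two_gt_d9)
    have e : (2:ℝ) ^ ((2:ℝ)/K) = Real.exp (Real.log 2 * ((2:ℝ)/K)) :=
      Real.rpow_def_of_pos (by norm_num) _
    rw [e]
    have e2 := Real.add_one_le_exp (Real.log 2 * ((2:ℝ)/K))
    have e3 : (K:ℝ) * (Real.log 2 * ((2:ℝ)/K) + 1) ≤ K * Real.exp (Real.log 2 * ((2:ℝ)/K)) :=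
      mul_le_mul_of_nonneg_left e2 (by positivity)
    have e4 : (K:ℝ) * (Real.log 2 * ((2:ℝ)/K) + 1) = 2 * Real.log 2 + K := by
      field_simp
    nlinarith
  -- per-X bounds
  have perX : ∀ X ∈ P, ((A X).card : ℝ) + ((B X).card : ℝ)
      ≤ 2 * ((K:ℝ) ^ N * (2:ℝ) ^ (-(L * m + 2))) := by
    intro X hX
    have hXm : X.card = m := (Finset.mem_powersetCard.mp hX).2
    set E : ℕ := (EX X).card with hEdef
    have hE3 : E ≤ N := Finset.card_le_univ _
    have hE1 : m * m - m ≤ 2 * E := by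
      have := offDiag_sym2_card X
      rwa [hXm] at this
    have hE2 : E ≤ m * m := by
      have h1 : E ≤ X.offDiag.card := Finset.card_image_le
      rw [Finset.offDiag_card, hXm] at h1
      omega
    have hmm : m ≤ m * m := Nat.le_mul_of_pos_left m (by omega)
    have hE1R : ((m:ℝ) * m - m) / 2 ≤ (E:ℝ) := by
      have c1 : ((m * m - m : ℕ) : ℝ) = (m:ℝ) * m - m := by
        rw [Nat.cast_sub hmm]; push_cast; ring
      have c2 : ((m * m - m : ℕ) : ℝ) ≤ 2 * E := by exact_mod_cast hE1
      linarith
    have hKN : (K:ℝ) ^ E * (K:ℝ) ^ (N - E) = (K:ℝ) ^ N := by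
      rw [← pow_add]
      congr 1
      omega
    -- the A bound
    have hAcard : (A X).card = (K - 1) ^ E * K ^ (N - E) := by
      have := count_forall (EX X) (fun v : Fin K => v ≠ 0)
      have hfil : (Finset.univ.filter (fun v : Fin K => v ≠ 0)).card = K - 1 := by
        rw [Finset.filter_ne', Finset.card_erase_of_mem (Finset.mem_univ _),
          Finset.card_univ, Fintype.card_fin]
      rw [hfil] at this
      exact this
    have hApow : (((K - 1 : ℕ)) : ℝ) ^ E ≤ (K:ℝ) ^ E * (2:ℝ) ^ (-(E:ℝ)/K) := by
      have c1 : (((K - 1 : ℕ)) : ℝ) = (K:ℝ) - 1 := by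
        rw [Nat.cast_sub (by omega)]; norm_num
      calc (((K - 1 : ℕ)) : ℝ) ^ E ≤ ((K:ℝ) * (2:ℝ) ^ (-(1:ℝ)/K)) ^ E := by
            apply pow_le_pow_left₀ _ _ E
            · rw [c1]; linarith
            · rw [c1]; exact hbaseA
        _ = (K:ℝ) ^ E * ((2:ℝ) ^ (-(1:ℝ)/K)) ^ E := mul_pow _ _ E
        _ = (K:ℝ) ^ E * (2:ℝ) ^ (-(E:ℝ)/K) := by
            rw [← Real.rpow_natCast ((2:ℝ) ^ (-(1:ℝ)/K)) E,
              ← Real.rpow_mul (by norm_num : (0:ℝ) ≤ 2)]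
            congr 1
            ring
    have hexpA : -(E:ℝ)/K ≤ -(L * m + 2) := by
      rw [neg_div, neg_le_neg_iff]
      calc L * m + 2 ≤ ((m:ℝ) * m - m) / (2 * K) := fact1
        _ ≤ (E:ℝ)/K := by
            rw [div_le_div_iff₀ (by positivity) (by positivity)]
            nlinarith
    have realA : ((A X).card : ℝ) ≤ (K:ℝ) ^ N * (2:ℝ) ^ (-(L * m + 2)) := by
      have c0 : ((A X).card : ℝ) = (((K - 1:ℕ)):ℝ) ^ E * (K:ℝ) ^ (N - E) := by
        rw [hAcard]; push_cast; ring
      calc ((A X).card : ℝ) = (((K - 1:ℕ)):ℝ) ^ E * (K:ℝ) ^ (N - E) := c0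
        _ ≤ (K:ℝ) ^ E * (2:ℝ) ^ (-(E:ℝ)/K) * (K:ℝ) ^ (N - E) :=
            mul_le_mul_of_nonneg_right hApow (by positivity)
        _ = (K:ℝ) ^ N * (2:ℝ) ^ (-(E:ℝ)/K) := by rw [← hKN]; ring
        _ ≤ (K:ℝ) ^ N * (2:ℝ) ^ (-(L * m + 2)) := by
            apply mul_le_mul_of_nonneg_left _ (by positivity)
            exact Real.rpow_le_rpow_of_exponent_le (by norm_num) hexpA
    -- the B bound
    have hBcard : ((B X).card) * 2 ^ z ≤ (K + 1) ^ E * K ^ (N - E) := count_tail (EX X) z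
    have hBpow : ((K + 1 : ℕ) : ℝ) ^ E ≤ (K:ℝ) ^ E * (2:ℝ) ^ ((2 * (E:ℝ))/K) := by
      calc ((K + 1 : ℕ) : ℝ) ^ E ≤ ((K:ℝ) * (2:ℝ) ^ ((2:ℝ)/K)) ^ E := by
            apply pow_le_pow_left₀ (by positivity) _ E
            push_cast
            exact hbaseB
        _ = (K:ℝ) ^ E * ((2:ℝ) ^ ((2:ℝ)/K)) ^ E := mul_pow _ _ E
        _ = (K:ℝ) ^ E * (2:ℝ) ^ ((2 * (E:ℝ))/K) := by
            rw [← Real.rpow_natCast ((2:ℝ) ^ ((2:ℝ)/K)) E,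
              ← Real.rpow_mul (by norm_num : (0:ℝ) ≤ 2)]
            congr 1
            ring
    have hexpB : (2 * (E:ℝ))/K - z ≤ -(L * m + 2) := by
      have c1 : (2 * (E:ℝ))/K ≤ 2 * ((m:ℝ) * m) / K := by
        gcongr
        exact_mod_cast hE2
      linarith [fact2]
    have realB : ((B X).card : ℝ) ≤ (K:ℝ) ^ N * (2:ℝ) ^ (-(L * m + 2)) := by
      have c0 : ((B X).card : ℝ) * (2:ℝ) ^ (z:ℕ) ≤ ((K + 1:ℕ):ℝ) ^ E * (K:ℝ) ^ (N - E) := by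
        exact_mod_cast hBcard
      have c2 : ((B X).card : ℝ) ≤ ((K + 1:ℕ):ℝ) ^ E * (K:ℝ) ^ (N - E) / (2:ℝ) ^ (z:ℕ) := by
        rw [le_div_iff₀ (by positivity)]
        exact c0
      calc ((B X).card : ℝ) ≤ ((K + 1:ℕ):ℝ) ^ E * (K:ℝ) ^ (N - E) / (2:ℝ) ^ (z:ℕ) := c2
        _ ≤ (K:ℝ) ^ E * (2:ℝ) ^ ((2 * (E:ℝ))/K) * (K:ℝ) ^ (N - E) / (2:ℝ) ^ (z:ℕ) := by
            gcongr
        _ = (K:ℝ) ^ N * ((2:ℝ) ^ ((2 * (E:ℝ))/K) / (2:ℝ) ^ (z:ℕ)) := by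
            rw [← hKN]; ring
        _ = (K:ℝ) ^ N * (2:ℝ) ^ ((2 * (E:ℝ))/K - z) := by
            rw [← Real.rpow_natCast (2:ℝ) z, ← Real.rpow_sub (by norm_num)]
        _ ≤ (K:ℝ) ^ N * (2:ℝ) ^ (-(L * m + 2)) := by
            apply mul_le_mul_of_nonneg_left _ (by positivity)
            exact Real.rpow_le_rpow_of_exponent_le (by norm_num) hexpB
    linarith
  -- total union bound
  have hBadlt : Bad.card < K ^ N := by
    have n1 : Bad.card ≤ ∑ X ∈ P, ((A X).card + (B X).card) := by
      calc Bad.card ≤ ∑ X ∈ P, (A X ∪ B X).card := Finset.card_biUnion_le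
        _ ≤ ∑ X ∈ P, ((A X).card + (B X).card) :=
            Finset.sum_le_sum (fun X _ => Finset.card_union_le _ _)
    have r1 : (Bad.card : ℝ) ≤ (P.card : ℝ) * (2 * ((K:ℝ) ^ N * (2:ℝ) ^ (-(L * m + 2)))) := by
      calc (Bad.card : ℝ) ≤ ((∑ X ∈ P, ((A X).card + (B X).card) : ℕ) : ℝ) := by
            exact_mod_cast n1
        _ = ∑ X ∈ P, (((A X).card : ℝ) + ((B X).card : ℝ)) := by push_cast; rfl
        _ ≤ ∑ X ∈ P, 2 * ((K:ℝ) ^ N * (2:ℝ) ^ (-(L * m + 2))) := Finset.sum_le_sum perX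
        _ = (P.card : ℝ) * (2 * ((K:ℝ) ^ N * (2:ℝ) ^ (-(L * m + 2)))) := by
            rw [Finset.sum_const, nsmul_eq_mul]
    have hPcard : (P.card : ℝ) ≤ (2:ℝ) ^ (L * m) := by
      have c1 : P.card = n.choose m := by
        rw [hPdef, Finset.card_powersetCard, Finset.card_univ, Fintype.card_fin]
      have c2 : (n.choose m : ℝ) ≤ ((n:ℝ)) ^ (m:ℕ) := by
        exact_mod_cast Nat.choose_le_pow n m
      have c4 : ((n:ℝ)) ^ (m:ℕ) = (2:ℝ) ^ (L * m) := by
        conv_lhs => rw [← Real.rpow_logb (by norm_num : (0:ℝ) < 2) (by norm_num) hnpos]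
        rw [← hLdef, ← Real.rpow_natCast ((2:ℝ) ^ L) m, ← Real.rpow_mul (by norm_num)]
      rw [c1, ← c4]
      exact c2
    have r2 : (Bad.card : ℝ) < (K:ℝ) ^ N := by
      have hKNpos : (0:ℝ) < (K:ℝ) ^ N := by positivity
      calc (Bad.card : ℝ) ≤ (P.card : ℝ) * (2 * ((K:ℝ)^N * (2:ℝ)^(-(L*m+2)))) := r1
        _ ≤ (2:ℝ)^(L*m) * (2 * ((K:ℝ)^N * (2:ℝ)^(-(L*m+2)))) :=
            mul_le_mul_of_nonneg_right hPcard (by positivity)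
        _ = (K:ℝ)^N * ((2:ℝ)^(L*m) * (2:ℝ)^(1:ℝ) * (2:ℝ)^(-(L*m+2))) := by
            rw [Real.rpow_one]; ring
        _ = (K:ℝ)^N * (2:ℝ)^(-(1:ℝ)) := by
            rw [← Real.rpow_add (by norm_num), ← Real.rpow_add (by norm_num)]
            congr 2
            ring
        _ < (K:ℝ)^N := by
            have c5 : (2:ℝ)^(-(1:ℝ)) < 1 := by
              rw [Real.rpow_neg_one]
              norm_num
            nlinarith
    have c6 : ((K ^ N : ℕ) : ℝ) = (K:ℝ) ^ N := by push_cast; rfl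
    have : (Bad.card : ℝ) < ((K ^ N : ℕ) : ℝ) := by rw [c6]; exact r2
    exact_mod_cast this
  -- pick a good colouring
  have hgood : ∃ ω : Sym2 (Fin n) → Fin K, ω ∉ Bad := by
    by_contra hcon
    push_neg at hcon
    have c1 : (Finset.univ : Finset (Sym2 (Fin n) → Fin K)) ⊆ Bad := fun ω _ => hcon ω
    have c2 := Finset.card_le_card c1
    rw [Finset.card_univ] at c2
    have c3 : Fintype.card (Sym2 (Fin n) → Fin K) = K ^ N := by
      rw [Fintype.card_fun, Fintype.card_fin]
    omega
  obtain ⟨ω, hω⟩ := hgood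
  refine ⟨fun e => if ω e = 0 then Fin.last s else Fin.castSucc (c'' e), ?_, ?_⟩
  · intro e
    by_cases he : ω e = 0 <;> simp [he]
  · intro X hXcard i
    have hmX : m ≤ X.card := by
      rw [hmdef]
      exact Nat.ceil_le.mpr hXcard
    obtain ⟨X', hX'sub, hX'card⟩ := Finset.exists_subset_card_eq hmX
    have hX'P : X' ∈ P := by
      rw [hPdef, Finset.mem_powersetCard]
      exact ⟨Finset.subset_univ X', hX'card⟩
    have hωX' : ω ∉ A X' ∪ B X' := fun hmem => hω (Finset.mem_biUnion.mpr ⟨X', hX'P, hmem⟩)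
    rw [Finset.mem_union] at hωX'
    push_neg at hωX'
    obtain ⟨hnA, hnB⟩ := hωX'
    have hzero : ∃ e ∈ EX X', ω e = 0 := by
      simp only [hAdef, Finset.mem_filter, Finset.mem_univ, true_and] at hnA
      push_neg at hnA
      exact hnA
    have hfew : ((EX X').filter (fun e => ω e = 0)).card < z := by
      simp only [hBdef, Finset.mem_filter, Finset.mem_univ, true_and, not_le] at hnB
      exact hnB
    by_cases hi : i = Fin.last s
    · obtain ⟨e, he, he0⟩ := hzero
      simp only [hEXdef, Finset.mem_image] at he
      obtain ⟨p, hp, rfl⟩ := he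
      rw [Finset.mem_offDiag] at hp
      refine ⟨p.1, hX'sub hp.1, p.2, hX'sub hp.2.1, hp.2.2, ?_⟩
      simp [he0, hi]
    · set j := i.castPred hi with hjdef
      obtain ⟨V', hV'sub, hV'edge, hV'deg⟩ :=
        prune (fun a b => a ≠ b ∧ ω s(a, b) = 0) d X'
      have hrsym : Symmetric (fun a b : Fin n => a ≠ b ∧ ω s(a, b) = 0) := by
        intro a b hab
        exact ⟨hab.1.symm, by rw [Sym2.eq_swap]; exact hab.2⟩
      obtain ⟨Y, hYsub, hYcard, hYindep⟩ :=
        greedy (fun a b => a ≠ b ∧ ω s(a, b) = 0) hrsym d V' hV'deg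
      have hsum : ∑ x ∈ X', (X'.filter (fun y => x ≠ y ∧ ω s(x, y) = 0)).card
          ≤ 2 * ((EX X').filter (fun e => ω e = 0)).card :=
        degsum_le X' (fun e => ω e = 0)
      have hYh : h ≤ Y.card := by
        rw [hX'card] at hV'edge
        have hV'le : V'.card ≤ m := by
          rw [← hX'card]
          exact Finset.card_le_card hV'sub
        have t1 : d * (m - V'.card) ≤ 2 * ((EX X').filter (fun e => ω e = 0)).card :=
          le_trans hV'edge hsum
        have t2 : 2 * ((EX X').filter (fun e => ω e = 0)).card ≤ 2 * z - 2 := by omega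
        have q1 : d * m = d * (m - V'.card) + d * V'.card := by
          rw [← Nat.mul_add, Nat.sub_add_cancel hV'le]
        have t4 : d * V'.card ≤ d * (d * Y.card) := Nat.mul_le_mul_left d hYcard
        have q2 : d * d * h + 2 * z ≤ (2 * z - 2) + d * (d * Y.card) := by
          calc d * d * h + 2 * z ≤ d * m := factT
            _ = d * (m - V'.card) + d * V'.card := q1
            _ ≤ (2 * z - 2) + d * (d * Y.card) := Nat.add_le_add (le_trans t1 t2) t4
        have q4 : 2 * z + d * d * h ≤ 2 * z + d * d * Y.card := by
          have e1 : (2 * z - 2) + d * (d * Y.card) ≤ 2 * z + d * (d * Y.card) :=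
            Nat.add_le_add_right (Nat.sub_le _ _) _
          have e2 : d * (d * Y.card) = d * d * Y.card := by ring
          rw [← e2]
          calc 2 * z + d * d * h = d * d * h + 2 * z := by ring
            _ ≤ (2 * z - 2) + d * (d * Y.card) := q2
            _ ≤ 2 * z + d * (d * Y.card) := e1
        have q5 : d * d * h ≤ d * d * Y.card := Nat.le_of_add_le_add_left q4
        exact Nat.le_of_mul_le_mul_left (by rw [Nat.mul_assoc] at q5 ⊢; exact q5)
          (by positivity)
      obtain ⟨Y'', hY''sub, hY''card⟩ := Finset.exists_subset_card_eq hYh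
      obtain ⟨x, hx, y, hy, hxy, hcxy⟩ := hcol Y'' hY''card j
      have hxX : x ∈ X := hX'sub (hV'sub (hYsub (hY''sub hx)))
      have hyX : y ∈ X := hX'sub (hV'sub (hYsub (hY''sub hy)))
      refine ⟨x, hxX, y, hyX, hxy, ?_⟩
      have hne0 : ω s(x, y) ≠ 0 := by
        intro h0
        exact (hYindep x (hY''sub hx) y (hY''sub hy) hxy) ⟨hxy, h0⟩
      have hfin : Fin.castSucc (c'' s(x, y)) = i := by
        rw [hcxy, hjdef]
        exact Fin.castSucc_castPred i hi
      simp [hne0, hfin]
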